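/- Let A ∈ ℝ^{k×n} with k < n and let b ∈ ℝ^k lie in the range of A. Then the basis pursuit problem min_{x ∈ ℝ^n} ‖x‖₁ subject to A x = b admits an optimal solution with cardinality (number of nonzero entries) at most k. -/

import Mathlib

open Matrix

/-- ℓ1 norm of a vector in `ℝ^n`. -/
noncomputable def norm1 {n : ℕ} (x : Fin n → ℝ) : ℝ := ∑ i, |x i|

private lemma norm1_cont' {n : ℕ} : Continuous (norm1 (n := n)) :=
  continuous_finset_sum _ fun i _ => (continuous_apply i).abs

private lemma abs_key' (X a : ℝ) (h : |a| ≤ |X|) : |X - a| + |X + a| = 2 * |X| := by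
  rcases le_or_gt 0 X with hX | hX
  · rw [abs_of_nonneg hX] at h ⊢
    rw [abs_le] at h
    rw [abs_of_nonneg (by linarith), abs_of_nonneg (by linarith)]; ring
  · rw [abs_of_neg hX] at h ⊢
    rw [abs_le] at h
    rw [abs_of_nonpos (by linarith), abs_of_nonpos (by linarith)]; ring

/-- Existence of a minimizer for basis pursuit. -/
private lemma bp_exists_min {k n : ℕ} (A : Matrix (Fin k) (Fin n) ℝ) (b : Fin k → ℝ)
    (hb : ∃ x0 : Fin n → ℝ, A.mulVec x0 = b) :
    ∃ z : Fin n → ℝ, A.mulVec z = b ∧ ∀ x', A.mulVec x' = b → norm1 z ≤ norm1 x' := by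
  obtain ⟨x0, hx0⟩ := hb
  have hAc : Continuous (A.mulVec) := by
    have := A.mulVecLin.continuous_of_finiteDimensional
    rwa [Matrix.coe_mulVecLin] at this
  set C := norm1 x0 with hC
  have hKsub : {x : Fin n → ℝ | A.mulVec x = b ∧ norm1 x ≤ C} ⊆
      Set.pi Set.univ (fun _ : Fin n => Set.Icc (-C) C) := by
    intro x hx i _
    have h1 : |x i| ≤ norm1 x :=
      Finset.single_le_sum (fun j _ => abs_nonneg (x j)) (Finset.mem_univ i)
    have h2 := abs_le.mp (le_trans h1 hx.2)
    exact ⟨h2.1, h2.2⟩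
  have hKcl : IsClosed {x : Fin n → ℝ | A.mulVec x = b ∧ norm1 x ≤ C} := by
    have h1 : IsClosed {x : Fin n → ℝ | A.mulVec x = b} := isClosed_eq hAc continuous_const
    have h2 : IsClosed {x : Fin n → ℝ | norm1 x ≤ C} := isClosed_le norm1_cont' continuous_const
    exact h1.inter h2
  have hKcp : IsCompact {x : Fin n → ℝ | A.mulVec x = b ∧ norm1 x ≤ C} :=
    (isCompact_univ_pi fun _ => isCompact_Icc).of_isClosed_subset hKcl hKsub
  have hKne : {x : Fin n → ℝ | A.mulVec x = b ∧ norm1 x ≤ C}.Nonempty := ⟨x0, hx0, le_refl _⟩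
  obtain ⟨z, hzK, hzmin⟩ := hKcp.exists_isMinOn hKne norm1_cont'.continuousOn
  refine ⟨z, hzK.1, fun x' hx' => ?_⟩
  rcases le_or_gt (norm1 x') C with h | h
  · exact hzmin ⟨hx', h⟩
  · exact le_trans (hzmin ⟨hx0, le_refl _⟩) h.le

/-- If the support columns of a minimizer are linearly dependent, there is a minimizer
with strictly smaller support. -/
private lemma bp_perturb {k n : ℕ} (A : Matrix (Fin k) (Fin n) ℝ) (b : Fin k → ℝ)
    (x : Fin n → ℝ) (hxb : A.mulVec x = b)
    (hxmin : ∀ x', A.mulVec x' = b → norm1 x ≤ norm1 x')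
    (c : Fin n → ℝ) (hc0 : A.mulVec c = 0)
    (hsupp : ∀ j, x j = 0 → c j = 0) (i₁ : Fin n) (hci₁ : c i₁ ≠ 0) :
    ∃ y : Fin n → ℝ, A.mulVec y = b ∧ (∀ x', A.mulVec x' = b → norm1 y ≤ norm1 x') ∧
      {i : Fin n | y i ≠ 0} ⊂ {i : Fin n | x i ≠ 0} := by
  classical
  set s : Finset (Fin n) := Finset.univ.filter (fun j => c j ≠ 0) with hs
  have hsne : s.Nonempty := ⟨i₁, by simp [hs, hci₁]⟩
  obtain ⟨i₀, hi₀s, hmin⟩ := s.exists_min_image (fun j => |x j| / |c j|) hsne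
  have hci₀ : c i₀ ≠ 0 := by simpa [hs] using hi₀s
  set t0 : ℝ := x i₀ / c i₀ with ht0
  have hkey : ∀ j, |t0 * c j| ≤ |x j| := by
    intro j
    by_cases hcj : c j = 0
    · simp [hcj]
    · have hmj := hmin j (by simp [hs, hcj])
      have h1 : |t0| = |x i₀| / |c i₀| := by rw [ht0, abs_div]
      rw [abs_mul, h1]
      calc |x i₀| / |c i₀| * |c j| ≤ |x j| / |c j| * |c j| := by
            apply mul_le_mul_of_nonneg_right hmj (abs_nonneg _)
        _ = |x j| := div_mul_cancel₀ _ (abs_ne_zero.mpr hcj)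
  set y : Fin n → ℝ := x - t0 • c with hy
  set y' : Fin n → ℝ := x + t0 • c with hy'
  have hyb : A.mulVec y = b := by
    rw [hy, Matrix.mulVec_sub, Matrix.mulVec_smul, hc0, hxb]; simp
  have hy'b : A.mulVec y' = b := by
    rw [hy', Matrix.mulVec_add, Matrix.mulVec_smul, hc0, hxb]; simp
  have hsum : norm1 y + norm1 y' = 2 * norm1 x := by
    rw [norm1, norm1, norm1, ← Finset.sum_add_distrib, Finset.mul_sum]
    refine Finset.sum_congr rfl fun j _ => ?_
    simpa [hy, hy', mul_comm] using abs_key' (x j) (t0 * c j) (hkey j)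
  have h1 : norm1 x ≤ norm1 y := hxmin y hyb
  have h2 : norm1 x ≤ norm1 y' := hxmin y' hy'b
  have hyx : norm1 y = norm1 x := by linarith
  refine ⟨y, hyb, fun x' hx' => hyx ▸ hxmin x' hx', ?_⟩
  constructor
  · intro j hj
    simp only [Set.mem_setOf_eq] at hj ⊢
    intro hxj
    apply hj
    simp [hy, hxj, hsupp j hxj]
  · intro hsub
    have hxi₀ : x i₀ ≠ 0 := fun h => hci₀ (hsupp i₀ h)
    have hyi₀ : y i₀ = 0 := by
      simp only [hy, Pi.sub_apply, Pi.smul_apply, smul_eq_mul, ht0]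
      field_simp
      ring
    exact (hsub hxi₀ : y i₀ ≠ 0) hyi₀

private lemma bp_dep_to_c {k n : ℕ} (A : Matrix (Fin k) (Fin n) ℝ) (x : Fin n → ℝ)
    (hdep : ¬ LinearIndependent ℝ (fun i : {i : Fin n // x i ≠ 0} => fun r => A r i)) :
    ∃ c : Fin n → ℝ, A.mulVec c = 0 ∧ (∀ j, x j = 0 → c j = 0) ∧ ∃ i₁, c i₁ ≠ 0 := by
  classical
  rw [Fintype.not_linearIndependent_iff] at hdep
  obtain ⟨g, hg, i₁, hgi₁⟩ := hdep
  refine ⟨fun j => if h : x j ≠ 0 then g ⟨j, h⟩ else 0, ?_, fun j hj => by simp [hj],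
    ⟨i₁, by simp [i₁.2, hgi₁]⟩⟩
  funext r
  have hr := congrFun hg r
  simp only [Finset.sum_apply, Pi.smul_apply, smul_eq_mul, Pi.zero_apply] at hr
  simp only [Matrix.mulVec, dotProduct, Pi.zero_apply]
  rw [← Finset.sum_subset (Finset.subset_univ (Finset.univ.filter (fun j => x j ≠ 0)))
    (by intro j _ hj; simp only [Finset.mem_filter, Finset.mem_univ, true_and, not_not] at hj
        simp [hj])]
  rw [Finset.sum_subtype (p := fun j => x j ≠ 0) (Finset.univ.filter fun j => x j ≠ 0)
    (by simp) (fun j => A r j * if h : x j ≠ 0 then g ⟨j, h⟩ else 0)]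
  rw [show (∑ a : {j : Fin n // x j ≠ 0}, A r a * if h : x (a : Fin n) ≠ 0 then g ⟨a, h⟩ else 0)
      = ∑ a : {j : Fin n // x j ≠ 0}, g a * A r (a : Fin n) from
    Finset.sum_congr rfl fun a _ => by simp [a.2, mul_comm]]
  exact hr

private lemma bp_card_bound {k n : ℕ} (A : Matrix (Fin k) (Fin n) ℝ) (x : Fin n → ℝ)
    (hli : LinearIndependent ℝ (fun i : {i : Fin n // x i ≠ 0} => fun r => A r i)) :
    {i : Fin n | x i ≠ 0}.ncard ≤ k := by
  classical
  have h1 : Fintype.card {i : Fin n // x i ≠ 0} ≤ Module.finrank ℝ (Fin k → ℝ) :=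
    hli.fintype_card_le_finrank
  simp only [Module.finrank_pi, Fintype.card_fin] at h1
  rwa [Set.ncard_eq_toFinset_card', Set.toFinset_setOf, ← Fintype.card_subtype]

/-- Basis pursuit `min ‖x‖₁ s.t. Ax = b`, with `A ∈ ℝ^{k×n}` wide (`k < n`) and `b` in the
range of `A`, admits an optimal solution with at most `k` nonzero entries. -/
theorem basis_pursuit_sparse_solution
    {k n : ℕ} (hkn : k < n) (A : Matrix (Fin k) (Fin n) ℝ) (b : Fin k → ℝ)
    (hb : ∃ x0 : Fin n → ℝ, A.mulVec x0 = b) :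
    ∃ x : Fin n → ℝ,
      A.mulVec x = b ∧
      (∀ x' : Fin n → ℝ, A.mulVec x' = b → norm1 x ≤ norm1 x') ∧
      {i : Fin n | x i ≠ 0}.ncard ≤ k := by
  classical
  obtain ⟨z, hzb, hzmin⟩ := bp_exists_min A b hb
  -- choose a minimizer with minimal support cardinality
  set T : Set ℕ := {m | ∃ x : Fin n → ℝ, (A.mulVec x = b ∧
    ∀ x', A.mulVec x' = b → norm1 x ≤ norm1 x') ∧ {i : Fin n | x i ≠ 0}.ncard = m} with hT
  have hTne : T.Nonempty := ⟨_, z, ⟨hzb, hzmin⟩, rfl⟩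
  obtain ⟨x, ⟨hxb, hxmin⟩, hxcard⟩ := Nat.sInf_mem hTne
  refine ⟨x, hxb, hxmin, ?_⟩
  by_cases hli : LinearIndependent ℝ (fun i : {i : Fin n // x i ≠ 0} => fun r => A r i)
  · exact bp_card_bound A x hli
  · exfalso
    obtain ⟨c, hc0, hsupp, i₁, hci₁⟩ := bp_dep_to_c A x hli
    obtain ⟨y, hyb, hymin, hyss⟩ := bp_perturb A b x hxb hxmin c hc0 hsupp i₁ hci₁
    have hlt : {i : Fin n | y i ≠ 0}.ncard < {i : Fin n | x i ≠ 0}.ncard :=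
      Set.ncard_lt_ncard hyss (Set.toFinite _)
    have hle : sInf T ≤ {i : Fin n | y i ≠ 0}.ncard := Nat.sInf_le ⟨y, ⟨hyb, hymin⟩, rfl⟩
    omega
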